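/- Let d > 0 and let a, b be naturals with 0 ≤ b < a, a ≥ 2. The recursively defined terminal function ω on words over {0,…,d−1} — ω(ε) = ε, ω(0u) = ω(u), and for 0 < i < d, ω(iu) = c·ω(v) where the run of the division-by-d^{|u|+1} transducer in base ad from state encoded by the word iu on the single input digit b·d outputs digit c and reaches the state encoded by 0v — satisfies, for every n and every word w of length n with encoding q = [w] (reverse base-d), [ω(w)]_{ad} = f_{a,b,d}^n(q) and |ω(w)| = μ_{a,b,d,n}(q). -/

import Mathlib

/-- `f a b d m = m / d` if `d ∣ m`, else `a * m + b`. -/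
def fabd (a b d : ℕ) : ℕ → ℕ := fun m => if d ∣ m then m / d else a * m + b

/-- `μ a b d n q` counts indices `k < n` with `d ∤ f^[k] q`. -/
def muabd (a b d n q : ℕ) : ℕ :=
  ((Finset.range n).filter (fun k => ¬ d ∣ (fabd a b d)^[k] q)).card

/-- The recursively defined terminal function `ω`, on a word of length `n`
over `{0,…,d-1}` encoded (reverse base-`d`) by the state `q` of the
division-by-`d^n` transducer in base `a*d`:
`ω(ε) = ε`, `ω(0u) = ω(u)`, and for a word starting with a nonzero digit,
`ω(iu) = c · ω(v)` where from state `q` on the single input digit `b*d`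
the division-by-`d^n` transducer in base `a*d` outputs `c` and reaches the
state `d·[v]` encoded by the word `0v`. -/
def omegaW (a b d : ℕ) : ℕ → ℕ → List ℕ
  | 0, _ => []
  | n + 1, q =>
      if d ∣ q then omegaW a b d n (q / d)
      else (q * (a * d) + b * d) / d ^ (n + 1) ::
        omegaW a b d n (((q * (a * d) + b * d) % d ^ (n + 1)) / d)

/-- Base-`a` value, most significant digit first. -/
def msbVal (a : ℕ) : List ℕ → ℕ
  | [] => 0
  | c :: w => c * a ^ w.length + msbVal a w

lemma mu_succ (a b d n q : ℕ) :
    muabd a b d (n+1) q = muabd a b d n (fabd a b d q) + (if d ∣ q then 0 else 1) := by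
  unfold muabd
  rw [Finset.card_filter, Finset.card_filter, Finset.sum_range_succ']
  simp only [Function.iterate_succ_apply, Function.iterate_zero_apply]
  by_cases h : d ∣ q <;> simp [h] <;>
    exact Finset.sum_congr rfl (fun k _ => by
      by_cases hk : d ∣ (fabd a b d)^[k] (fabd a b d q) <;> simp [hk])

lemma key (a b d : ℕ) (hd : 0 < d) :
    ∀ n c r, (fabd a b d)^[n] (c * d ^ n + r)
        = c * (a*d) ^ (muabd a b d n r) + (fabd a b d)^[n] r
      ∧ muabd a b d n (c * d ^ n + r) = muabd a b d n r := by
  intro n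
  induction n with
  | zero => intro c r; simp [muabd]
  | succ n ih =>
    intro c r
    by_cases h : d ∣ r
    · obtain ⟨s, rfl⟩ := h
      have h1 : c * d ^ (n+1) + d * s = d * (c * d ^ n + s) := by ring
      have hdv1 : d ∣ d * s := ⟨s, rfl⟩
      have hdv2 : d ∣ c * d ^ (n+1) + d * s := ⟨c * d ^ n + s, h1⟩
      have h2 : fabd a b d (c * d ^ (n+1) + d * s) = c * d ^ n + s := by
        rw [fabd]; rw [if_pos hdv2, h1, Nat.mul_div_cancel_left _ hd]
      have h3 : fabd a b d (d * s) = s := by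
        rw [fabd]; simp only [if_pos hdv1, Nat.mul_div_cancel_left _ hd]
      constructor
      · rw [Function.iterate_succ_apply, Function.iterate_succ_apply, h2, h3, (ih c s).1,
          mu_succ, h3, if_pos hdv1, add_zero]
      · rw [mu_succ, mu_succ, h2, h3, if_pos hdv1, if_pos hdv2, (ih c s).2]
    · have hnd : ¬ d ∣ c * d ^ (n+1) + r := by
        intro hdd
        exact h ((Nat.dvd_add_right ⟨c * d ^ n, by ring⟩).mp hdd)
      have h2 : fabd a b d (c * d ^ (n+1) + r) = (a * c * d) * d ^ n + (a * r + b) := by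
        rw [fabd]; simp only [if_neg hnd]; ring
      have h3 : fabd a b d r = a * r + b := by rw [fabd]; simp only [if_neg h]
      constructor
      · rw [Function.iterate_succ_apply, Function.iterate_succ_apply, h2, h3,
          (ih (a*c*d) (a*r+b)).1, mu_succ, h3, if_neg h, pow_succ]
        ring
      · rw [mu_succ, mu_succ, h2, h3, if_neg h, if_neg hnd, (ih (a*c*d) (a*r+b)).2]

theorem omegaW_spec (a b d : ℕ) (hb : b < a) (ha : a ≠ 1) (hd : 0 < d)
    (n q : ℕ) (hq : q < d ^ n) :
    msbVal (a * d) (omegaW a b d n q) = (fabd a b d)^[n] q ∧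
    (omegaW a b d n q).length = muabd a b d n q := by
  induction n generalizing q with
  | zero =>
    have : q = 0 := by simpa using hq
    simp [omegaW, msbVal, muabd, this]
  | succ n ih =>
    by_cases h : d ∣ q
    · have hq' : q / d < d ^ n := by
        rw [Nat.div_lt_iff_lt_mul hd]
        calc q < d ^ (n+1) := hq
        _ = d ^ n * d := pow_succ d n
      have hf : fabd a b d q = q / d := by rw [fabd]; simp only [if_pos h]
      obtain ⟨ihv, ihl⟩ := ih _ hq'
      constructor
      · simp only [omegaW, if_pos h, ihv, Function.iterate_succ_apply, hf]
      · simp only [omegaW, if_pos h, ihl, mu_succ, hf, if_pos h, add_zero]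
    · have e : q * (a * d) + b * d = d * (a * q + b) := by ring
      have hpow : d ^ (n+1) = d * d ^ n := by rw [pow_succ, mul_comm]
      have hc : (q * (a * d) + b * d) / d ^ (n+1) = (a * q + b) / d ^ n := by
        rw [e, hpow, Nat.mul_div_mul_left _ _ hd]
      have hr : (q * (a * d) + b * d) % d ^ (n+1) / d = (a * q + b) % d ^ n := by
        rw [e, hpow, Nat.mul_mod_mul_left, Nat.mul_div_cancel_left _ hd]
      have hrlt : (a * q + b) % d ^ n < d ^ n := Nat.mod_lt _ (pow_pos hd n)
      obtain ⟨ihv, ihl⟩ := ih _ hrlt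
      have hsplit : (a * q + b) / d ^ n * d ^ n + (a * q + b) % d ^ n = a * q + b :=
        Nat.div_add_mod' _ _
      have hf : fabd a b d q = a * q + b := by rw [fabd]; simp only [if_neg h]
      have hk := key a b d hd n ((a * q + b) / d ^ n) ((a * q + b) % d ^ n)
      rw [hsplit] at hk
      constructor
      · simp only [omegaW, if_neg h, hc, hr, msbVal, ihv, ihl,
          Function.iterate_succ_apply, hf]
        exact hk.1.symm
      · simp only [omegaW, if_neg h, hc, hr, List.length_cons, ihl, mu_succ, hf,
          if_neg h]
        rw [hk.2]
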